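/- arXiv:math/0202040 — 2 statements merged into one kernel-verified Lean document; each statement's English description precedes it below -/
import Mathlib

section
/- Let K be a field of characteristic 0, U = K[x_1,...,x_n] the polynomial algebra with partial derivatives ∂_1,...,∂_n, and let pr : U → K be the constant-term projection. Let ψ : U^k → U be a k-linear map that is D-invariant, i.e. for every i = 1,...,n and all u_1,...,u_k ∈ U, ∂_i(ψ(u_1,...,u_k)) = Σ_{l=1}^k ψ(u_1,...,∂_i(u_l),...,u_k). Then ψ(u_1,...,u_k) = Σ_{α(1),...,α(k) ∈ ℕ^n} (∂^{α(1)}(u_1)/α(1)!) ··· (∂^{α(k)}(u_k)/α(k)!) · pr(ψ(x^{α(1)},...,x^{α(k)})), where the sum has only finitely many nonzero terms. -/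
open Finset MvPolynomial

/-- The iterated partial derivative `∂^α = ∂_1^{α_1} ∘ ⋯ ∘ ∂_n^{α_n}` on `K[x_1,…,x_n]`. -/
noncomputable def derivPow {K : Type*} [Field K] {n : ℕ} (α : Fin n → ℕ) :
    MvPolynomial (Fin n) K →ₗ[K] MvPolynomial (Fin n) K :=
  (List.ofFn fun i : Fin n =>
    ((pderiv i).toLinearMap : MvPolynomial (Fin n) K →ₗ[K] MvPolynomial (Fin n) K) ^ (α i)).prod

/-- The term `(∂^{α(1)}(u_1)/α(1)!) ⋯ (∂^{α(k)}(u_k)/α(k)!) · pr ψ(x^{α(1)},…,x^{α(k)})`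
of the Taylor-type expansion of a `D`-invariant `k`-linear map `ψ`. -/
noncomputable def taylorTerm {K : Type*} [Field K] {n k : ℕ}
    (ψ : (Fin k → MvPolynomial (Fin n) K) → MvPolynomial (Fin n) K)
    (α : Fin k → Fin n → ℕ) (u : Fin k → MvPolynomial (Fin n) K) :
    MvPolynomial (Fin n) K :=
  constantCoeff (ψ fun j => ∏ i : Fin n, X i ^ α j i) •
    ∏ j : Fin k, (((∏ i : Fin n, Nat.factorial (α j i) : ℕ) : K)⁻¹ • derivPow (α j) (u j))

namespace TaylorAux

variable {K : Type*} [Field K] {n k : ℕ}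

local notation "U" => MvPolynomial (Fin n) K

lemma pderiv_pow_monomial (i : Fin n) (m : ℕ) (d : Fin n →₀ ℕ) (c : K) :
    (((pderiv i).toLinearMap : U →ₗ[K] U) ^ m) (monomial d c) =
      monomial (d - Finsupp.single i m) (c * (d i).descFactorial m) := by
  induction m with
  | zero => simp
  | succ m ih =>
    rw [pow_succ', Module.End.mul_apply, ih]
    rw [Derivation.coeFn_coe, pderiv_monomial]
    congr 1
    · rw [tsub_tsub, ← Finsupp.single_add]
    · rw [Finsupp.tsub_apply, Finsupp.single_eq_same, Nat.descFactorial_succ]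
      push_cast
      ring

lemma list_prod_monomial (α : Fin n → ℕ) (d : Fin n →₀ ℕ) (c : K) :
    ∀ l : List (Fin n), l.Nodup →
      ((l.map fun i =>
        ((pderiv i).toLinearMap : U →ₗ[K] U) ^ α i).prod) (monomial d c) =
        monomial (d - ∑ i ∈ l.toFinset, Finsupp.single i (α i))
          (c * ∏ i ∈ l.toFinset, (d i).descFactorial (α i)) := by
  intro l
  induction l with
  | nil => simp
  | cons a l ih =>
    intro hnd
    rw [List.nodup_cons] at hnd
    rw [List.map_cons, List.prod_cons, Module.End.mul_apply, ih hnd.2, pderiv_pow_monomial]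
    have ha : a ∉ l.toFinset := by simpa using hnd.1
    rw [List.toFinset_cons, Finset.sum_insert ha, Finset.prod_insert ha]
    congr 1
    · rw [tsub_tsub, add_comm]
    · have : (d - ∑ i ∈ l.toFinset, Finsupp.single i (α i)) a = d a := by
        rw [Finsupp.tsub_apply]
        have : (∑ i ∈ l.toFinset, Finsupp.single i (α i)) a = 0 := by
          rw [Finsupp.finset_sum_apply]
          exact Finset.sum_eq_zero fun i hi =>
            Finsupp.single_eq_of_ne' (by rintro rfl; exact ha hi)
        omega
      rw [this]
      push_cast
      ring

/-- The exponent multi-index of `α` as a `Finsupp`. -/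
noncomputable def A (α : Fin n → ℕ) : Fin n →₀ ℕ := ∑ i, Finsupp.single i (α i)

@[simp] lemma A_apply (α : Fin n → ℕ) (j : Fin n) : A α j = α j := by
  rw [A, Finsupp.finset_sum_apply, Finset.sum_eq_single j
    (fun i _ hne => Finsupp.single_eq_of_ne' hne) (by simp)]
  simp

lemma A_coe (d : Fin n →₀ ℕ) : A (⇑d) = d := by
  ext j; simp

lemma derivPow_monomial (α : Fin n → ℕ) (d : Fin n →₀ ℕ) (c : K) :
    derivPow α (monomial d c) =
      monomial (d - A α) (c * ∏ i, (d i).descFactorial (α i)) := by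
  have := list_prod_monomial α d c (List.finRange n) (List.nodup_finRange n)
  rw [← List.ofFn_eq_map] at this
  simpa [derivPow, A, List.toFinset_finRange] using this

lemma constantCoeff_derivPow (α : Fin n → ℕ) (p : U) :
    constantCoeff (derivPow α p) = ((∏ i, (α i).factorial : ℕ) : K) * coeff (A α) p := by
  induction p using MvPolynomial.induction_on' with
  | monomial d c =>
    rw [derivPow_monomial, constantCoeff_monomial, coeff_monomial]
    by_cases h : d = A α
    · subst h
      rw [if_pos (tsub_self _), if_pos rfl]
      have : ∀ i, ((A α) i).descFactorial (α i) = (α i).factorial := fun i => by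
        rw [A_apply]; exact Nat.descFactorial_self _
      rw [Finset.prod_congr rfl fun i _ => this i]
      ring
    · rw [if_neg h, mul_zero]
      by_cases h2 : d - A α = 0
      · rw [if_pos h2]
        have hle : ∀ i, d i ≤ α i := fun i => by
          simpa using (Finsupp.le_def.mp (tsub_eq_zero_iff_le.mp h2)) i
        have : ∃ i, d i < α i := by
          by_contra hc
          push_neg at hc
          exact h (by ext i; rw [A_apply]; exact le_antisymm (hle i) (hc i))
        obtain ⟨i, hi⟩ := this
        rw [Finset.prod_eq_zero (Finset.mem_univ i)
          (Nat.descFactorial_eq_zero_iff_lt.mpr hi)]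
        simp
      · rw [if_neg h2]
  | add p q hp hq =>
    simp [map_add, coeff_add, hp, hq, mul_add]

lemma eq_zero_of_constantCoeff_derivPow [CharZero K] (p : U)
    (h : ∀ γ : Fin n → ℕ, constantCoeff (derivPow γ p) = 0) : p = 0 := by
  ext d
  have := h (⇑d)
  rw [constantCoeff_derivPow, A_coe] at this
  have hfac : ((∏ i, (d i).factorial : ℕ) : K) ≠ 0 :=
    Nat.cast_ne_zero.mpr (Finset.prod_ne_zero_iff.mpr
      fun i _ => (Nat.factorial_pos _).ne')
  simpa [coeff_zero] using (mul_eq_zero.mp this).resolve_left hfac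

lemma derivPow_support_finite (p : U) :
    (Function.support fun α : Fin n → ℕ => derivPow α p).Finite := by
  apply Set.Finite.subset
    (Set.Finite.biUnion p.support.finite_toSet fun d _ => Set.finite_Iic (⇑d : Fin n → ℕ))
  intro α hα
  simp only [Function.mem_support] at hα
  by_contra hc
  simp only [Set.mem_iUnion, Finset.mem_coe, Set.mem_Iic, not_exists] at hc
  apply hα
  rw [p.as_sum, map_sum]
  refine Finset.sum_eq_zero fun d hd => ?_
  rw [derivPow_monomial]
  have : ∃ i, d i < α i := by
    by_contra h2
    push_neg at h2
    exact hc d hd fun i => h2 i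
  obtain ⟨i, hi⟩ := this
  rw [Finset.prod_eq_zero (Finset.mem_univ i) (Nat.descFactorial_eq_zero_iff_lt.mpr hi)]
  simp

lemma pderiv_pderiv (i j : Fin n) (p : U) :
    pderiv i (pderiv j p) = pderiv j (pderiv i p) := by
  induction p using MvPolynomial.induction_on' with
  | monomial d c =>
    rcases eq_or_ne i j with rfl | hij
    · rfl
    · simp only [pderiv_monomial]
      congr 1
      · rw [tsub_tsub, tsub_tsub, add_comm]
      · rw [Finsupp.tsub_apply, Finsupp.tsub_apply,
          Finsupp.single_eq_of_ne' hij, Finsupp.single_eq_of_ne' (Ne.symm hij), tsub_zero, tsub_zero]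
        push_cast
        ring
  | add p q hp hq => simp [map_add, hp, hq]

lemma pderiv_derivPow (i : Fin n) (α : Fin n → ℕ) (p : U) :
    pderiv i (derivPow α p) = derivPow α (pderiv i p) := by
  have hcomm : Commute ((pderiv i).toLinearMap : U →ₗ[K] U)
      ((List.ofFn fun j : Fin n =>
        ((pderiv j).toLinearMap : U →ₗ[K] U) ^ (α j)).prod) := by
    apply Commute.list_prod_right
    intro x hx
    rw [List.mem_ofFn] at hx
    obtain ⟨j, rfl⟩ := hx
    exact Commute.pow_right (LinearMap.ext fun p => pderiv_pderiv i j p) _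
  have := congrFun (congrArg DFunLike.coe hcomm) p
  simpa [derivPow, Module.End.mul_apply] using this

/-- The normalized derivative `∂^α/α!` as a linear map. -/
noncomputable def F (α : Fin n → ℕ) : U →ₗ[K] U :=
  ((∏ i, Nat.factorial (α i) : ℕ) : K)⁻¹ • derivPow α

lemma taylorTerm_eq (ψ : (Fin k → U) → U) (α : Fin k → Fin n → ℕ) (u : Fin k → U) :
    taylorTerm ψ α u =
      constantCoeff (ψ fun j => ∏ i : Fin n, X i ^ α j i) • ∏ j : Fin k, F (α j) (u j) := rfl

lemma prod_apply_update (f : Fin k → U →ₗ[K] U) (u : Fin k → U) (l : Fin k) (z : U) :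
    ∏ j : Fin k, f j (Function.update u l z j) =
      f l z * ∏ j ∈ Finset.univ.erase l, f j (u j) := by
  have : (fun j => f j (Function.update u l z j)) =
      Function.update (fun j => f j (u j)) l (f l z) := by
    funext j
    rcases eq_or_ne j l with rfl | h
    · simp
    · simp [Function.update_of_ne h]
  rw [this, Finset.prod_update_of_mem (Finset.mem_univ l), ← Finset.erase_eq]

lemma taylorTerm_update (ψ : (Fin k → U) → U) (α : Fin k → Fin n → ℕ)
    (u : Fin k → U) (l : Fin k) (c : K) (x y : U) :
    taylorTerm ψ α (Function.update u l (c • x + y)) =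
      c • taylorTerm ψ α (Function.update u l x) + taylorTerm ψ α (Function.update u l y) := by
  simp only [taylorTerm_eq, prod_apply_update, map_add, map_smul]
  rw [add_mul, smul_mul_assoc, smul_add, smul_comm]

lemma pderiv_F (i : Fin n) (α : Fin n → ℕ) (p : U) :
    pderiv i (F α p) = F α (pderiv i p) := by
  simp only [F, LinearMap.smul_apply, Derivation.map_smul, pderiv_derivPow]

lemma taylorTerm_pderiv (ψ : (Fin k → U) → U) (α : Fin k → Fin n → ℕ)
    (u : Fin k → U) (i : Fin n) :
    pderiv i (taylorTerm ψ α u) =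
      ∑ l : Fin k, taylorTerm ψ α (Function.update u l (pderiv i (u l))) := by
  have hprod : ∀ (s : Finset (Fin k)) (f : Fin k → U),
      pderiv i (∏ j ∈ s, f j) = ∑ j ∈ s, pderiv i (f j) * ∏ l ∈ s.erase j, f l := by
    intro s
    induction s using Finset.induction_on with
    | empty => simp
    | @insert a s ha ih =>
      intro f
      rw [Finset.prod_insert ha, pderiv_mul, ih, Finset.sum_insert ha,
        Finset.erase_insert ha, Finset.mul_sum]
      congr 1
      refine Finset.sum_congr rfl fun j hj => ?_
      have haj : a ≠ j := by rintro rfl; exact ha hj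
      rw [Finset.erase_insert_of_ne haj, Finset.prod_insert
        (fun h => ha (Finset.mem_of_mem_erase h))]
      ring
  simp only [taylorTerm_eq]
  rw [Derivation.map_smul, hprod Finset.univ, Finset.smul_sum]
  refine Finset.sum_congr rfl fun l _ => ?_
  rw [prod_apply_update, pderiv_F]

lemma taylorTerm_support_finite (ψ : (Fin k → U) → U) (u : Fin k → U) :
    (Function.support fun α : Fin k → Fin n → ℕ => taylorTerm ψ α u).Finite := by
  apply Set.Finite.subset (Set.Finite.pi' fun j =>
    derivPow_support_finite (u j))
  intro α hα
  simp only [Function.mem_support] at hα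
  simp only [Set.mem_setOf_eq]
  intro j
  simp only [Function.mem_support]
  intro h
  apply hα
  rw [taylorTerm_eq, Finset.prod_eq_zero (Finset.mem_univ j)
    (by simp [F, h]), smul_zero]

/-- The Taylor expansion candidate. -/
noncomputable def Phi (ψ : (Fin k → U) → U) (u : Fin k → U) : U :=
  ∑ᶠ α : Fin k → Fin n → ℕ, taylorTerm ψ α u

lemma Phi_update (ψ : (Fin k → U) → U) (u : Fin k → U) (l : Fin k) (c : K) (x y : U) :
    Phi ψ (Function.update u l (c • x + y)) =
      c • Phi ψ (Function.update u l x) + Phi ψ (Function.update u l y) := by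
  rw [Phi, finsum_congr (fun α => taylorTerm_update ψ α u l c x y)]
  have h := finsum_add_distrib
      (f := fun α : Fin k → Fin n → ℕ => c • taylorTerm ψ α (Function.update u l x))
      (g := fun α : Fin k → Fin n → ℕ => taylorTerm ψ α (Function.update u l y))
      ((taylorTerm_support_finite ψ (Function.update u l x)).subset fun α hα => by
        simp only [Function.mem_support] at *
        exact fun h => hα (by rw [h, smul_zero]))
      (taylorTerm_support_finite ψ _)
  rw [h, ← smul_finsum' c (taylorTerm_support_finite ψ _)]
  rfl

lemma Phi_pderiv (ψ : (Fin k → U) → U) (u : Fin k → U) (i : Fin n) :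
    pderiv i (Phi ψ u) = ∑ l : Fin k, Phi ψ (Function.update u l (pderiv i (u l))) := by
  have h1 : pderiv i (Phi ψ u) = ∑ᶠ α : Fin k → Fin n → ℕ, pderiv i (taylorTerm ψ α u) := by
    have := AddMonoidHom.map_finsum ((pderiv i).toLinearMap.toAddMonoidHom :
      U →+ U) (taylorTerm_support_finite ψ u)
    simpa [Phi] using this
  rw [h1, finsum_congr (fun α => taylorTerm_pderiv ψ α u i),
    finsum_sum_comm _ _ (fun l _ => taylorTerm_support_finite ψ _)]
  rfl

lemma prod_X_pow (α : Fin n → ℕ) :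
    (∏ i : Fin n, X i ^ α i : U) = monomial (A α) 1 := by
  have h1 : (monomial (A α) (1:K)) = ∏ x ∈ (A α).support, X x ^ (A α) x :=
    (prod_X_pow_eq_monomial).symm
  rw [h1, Finset.prod_subset (Finset.subset_univ ((A α).support))
    (fun x _ hx => by rw [Finsupp.notMem_support_iff.mp hx, pow_zero])]
  exact Finset.prod_congr rfl fun i _ => by rw [A_apply]

lemma pr_F_monomial [CharZero K] (β : Fin n → ℕ) (d : Fin n →₀ ℕ) :
    constantCoeff (F β (monomial d (1 : K))) = if ⇑d = β then 1 else 0 := by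
  have hfac : ((∏ i, (β i).factorial : ℕ) : K) ≠ 0 :=
    Nat.cast_ne_zero.mpr (Finset.prod_ne_zero_iff.mpr
      fun i _ => (Nat.factorial_pos _).ne')
  rw [F, LinearMap.smul_apply, constantCoeff_smul, constantCoeff_derivPow, coeff_monomial,
    smul_eq_mul]
  have hiff : d = A β ↔ ⇑d = β := by
    constructor
    · rintro rfl; funext i; exact A_apply β i
    · rintro rfl; exact (A_coe d).symm
  by_cases h : ⇑d = β
  · rw [if_pos (hiff.mpr h), if_pos h, mul_one, inv_mul_cancel₀ hfac]
  · rw [if_neg (fun hh => h (hiff.mp hh)), if_neg h, mul_zero, mul_zero]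

lemma pr_taylorTerm_monomial [CharZero K] (ψ : (Fin k → U) → U)
    (α : Fin k → Fin n → ℕ) (d : Fin k → (Fin n →₀ ℕ)) :
    constantCoeff (taylorTerm ψ α fun j => monomial (d j) 1) =
      if (fun j => ⇑(d j)) = α then constantCoeff (ψ fun j => monomial (d j) 1) else 0 := by
  rw [taylorTerm_eq, constantCoeff_smul, smul_eq_mul, map_prod]
  by_cases h : (fun j => ⇑(d j)) = α
  · have hj : ∀ j, ⇑(d j) = α j := fun j => congrFun h j
    have harg : (fun j => ∏ i : Fin n, (X i : U) ^ α j i) = fun j => monomial (d j) 1 := by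
      funext j
      rw [prod_X_pow, ← hj j, A_coe]
    rw [if_pos h, harg]
    rw [Finset.prod_congr rfl fun j _ => pr_F_monomial (α j) (d j)]
    rw [Finset.prod_congr rfl fun j _ => if_pos (hj j), Finset.prod_const_one, mul_one]
  · rw [if_neg h]
    have : ∃ j, ⇑(d j) ≠ α j := by
      by_contra hc; push_neg at hc; exact h (funext hc)
    obtain ⟨j, hj⟩ := this
    rw [Finset.prod_eq_zero (Finset.mem_univ j)
      (by rw [pr_F_monomial, if_neg hj]), mul_zero]

lemma Phi_monomial_pr [CharZero K] (ψ : (Fin k → U) → U) (d : Fin k → (Fin n →₀ ℕ)) :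
    constantCoeff (Phi ψ fun j => monomial (d j) 1) =
      constantCoeff (ψ fun j => monomial (d j) 1) := by
  have h1 : constantCoeff (Phi ψ fun j => monomial (d j) 1) =
      ∑ᶠ α : Fin k → Fin n → ℕ, constantCoeff (taylorTerm ψ α fun j => monomial (d j) 1) := by
    have := AddMonoidHom.map_finsum ((constantCoeff : MvPolynomial (Fin n) K →+* K).toAddMonoidHom)
      (taylorTerm_support_finite ψ fun j => monomial (d j) 1)
    simpa [Phi] using this
  rw [h1, finsum_eq_single _ (fun j => ⇑(d j))
    (fun α hα => by rw [pr_taylorTerm_monomial, if_neg (Ne.symm hα)]),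
    pr_taylorTerm_monomial, if_pos rfl]

/-- Package a map satisfying the combined linearity condition as a `MultilinearMap`. -/
noncomputable def mkML (f : (Fin k → U) → U)
    (hf : ∀ (v : Fin k → U) (i : Fin k) (c : K) (x y : U),
      f (Function.update v i (c • x + y)) =
        c • f (Function.update v i x) + f (Function.update v i y)) :
    MultilinearMap K (fun _ : Fin k => U) U where
  toFun := f
  map_update_add' := by
    intro dec m i x y
    haveI : Subsingleton (DecidableEq (Fin k)) :=
      ⟨fun a b => funext fun s => funext fun t => Subsingleton.elim _ _⟩
    rw [Subsingleton.elim dec (instDecidableEqFin k)]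
    clear dec
    have := hf m i 1 x y
    simpa using this
  map_update_smul' := by
    intro dec m i c x
    haveI : Subsingleton (DecidableEq (Fin k)) :=
      ⟨fun a b => funext fun s => funext fun t => Subsingleton.elim _ _⟩
    rw [Subsingleton.elim dec (instDecidableEqFin k)]
    clear dec
    have h0 : f (Function.update m i 0) = 0 := by
      have := hf m i 1 0 0
      simp only [one_smul, add_zero] at this
      exact (left_eq_add.mp this)
    have := hf m i c x 0
    simpa [h0] using this

end TaylorAux

/-- Any `D`-invariant `k`-linear map `ψ` on `K[x_1,…,x_n]` (char `K = 0`) is determined by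
the constant terms of its values on monomials:
`ψ(u_1,…,u_k) = Σ_α (∂^{α(1)}u_1/α(1)!)⋯(∂^{α(k)}u_k/α(k)!)·pr ψ(x^{α(1)},…,x^{α(k)})`,
a sum with finitely many nonzero terms. -/
theorem dInvariant_taylor_expansion {K : Type*} [Field K] [CharZero K] {n k : ℕ}
    (ψ : (Fin k → MvPolynomial (Fin n) K) → MvPolynomial (Fin n) K)
    (hml : ∀ (v : Fin k → MvPolynomial (Fin n) K) (i : Fin k) (c : K)
      (x y : MvPolynomial (Fin n) K),
      ψ (Function.update v i (c • x + y)) =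
        c • ψ (Function.update v i x) + ψ (Function.update v i y))
    (hinv : ∀ (i : Fin n) (u : Fin k → MvPolynomial (Fin n) K),
      pderiv i (ψ u) = ∑ l : Fin k, ψ (Function.update u l (pderiv i (u l)))) :
    ∀ u : Fin k → MvPolynomial (Fin n) K,
      (Function.support fun α : Fin k → Fin n → ℕ => taylorTerm ψ α u).Finite ∧
      ψ u = ∑ᶠ α : Fin k → Fin n → ℕ, taylorTerm ψ α u := by
  intro u
  refine ⟨TaylorAux.taylorTerm_support_finite ψ u, ?_⟩
  classical
  have hpr : ∀ v, constantCoeff (ψ v) = constantCoeff (TaylorAux.Phi ψ v) := by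
    let L : MvPolynomial (Fin n) K →ₗ[K] K := lcoeff K 0
    let Ψml := L.compMultilinearMap (TaylorAux.mkML ψ hml)
    let Φml := L.compMultilinearMap (TaylorAux.mkML (TaylorAux.Phi ψ)
      (fun v i c x y => TaylorAux.Phi_update ψ v i c x y))
    have hext : Ψml = Φml := by
      apply Module.Basis.ext_multilinear (fun _ => MvPolynomial.basisMonomials (Fin n) K)
      intro v
      have hb : (fun i => (MvPolynomial.basisMonomials (Fin n) K) (v i)) =
          fun i => monomial (v i) (1 : K) := by
        funext i
        rw [coe_basisMonomials]
      simp only [LinearMap.compMultilinearMap_apply, Ψml, Φml]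
      rw [hb]
      show L (ψ fun j => monomial (v j) 1) = L (TaylorAux.Phi ψ fun j => monomial (v j) 1)
      have h2 := TaylorAux.Phi_monomial_pr ψ v
      simp only [L, lcoeff_apply, ← constantCoeff_eq] at *
      exact h2.symm
    intro v
    have h3 := DFunLike.congr_fun hext v
    simp only [LinearMap.compMultilinearMap_apply, Ψml, Φml, L, lcoeff_apply,
      ← constantCoeff_eq] at h3
    exact h3
  set T : Submodule K (MvPolynomial (Fin n) K) :=
    Submodule.span K (Set.range fun v => ψ v - TaylorAux.Phi ψ v) with hTdef
  have hgen : ∀ v, ψ v - TaylorAux.Phi ψ v ∈ T := fun v => Submodule.subset_span ⟨v, rfl⟩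
  have hTd : ∀ (i : Fin n), ∀ p ∈ T, pderiv i p ∈ T := by
    intro i p hp
    induction hp using Submodule.span_induction with
    | mem x hx =>
      obtain ⟨v, rfl⟩ := hx
      rw [map_sub, hinv i v, TaylorAux.Phi_pderiv ψ v i, ← Finset.sum_sub_distrib]
      exact Submodule.sum_mem _ fun l _ => hgen _
    | zero => simpa using T.zero_mem
    | add a b _ _ ha hb => rw [map_add]; exact T.add_mem ha hb
    | smul c a _ ha => rw [(pderiv i).map_smul]; exact T.smul_mem c ha
  have hT0 : ∀ p ∈ T, constantCoeff p = 0 := by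
    intro p hp
    induction hp using Submodule.span_induction with
    | mem x hx => obtain ⟨v, rfl⟩ := hx; rw [map_sub, hpr v, sub_self]
    | zero => simp
    | add a b _ _ ha hb => rw [map_add, ha, hb, add_zero]
    | smul c a _ ha => rw [constantCoeff_smul, ha, smul_zero]
  have hTpow : ∀ (i : Fin n) (m : ℕ), ∀ p ∈ T,
      (((pderiv i).toLinearMap : MvPolynomial (Fin n) K →ₗ[K] _) ^ m) p ∈ T := by
    intro i m
    induction m with
    | zero => intro p hp; simpa using hp
    | succ m ih =>
      intro p hp
      rw [pow_succ', Module.End.mul_apply]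
      exact hTd i _ (ih p hp)
  have hTlist : ∀ (γ : Fin n → ℕ) (l : List (Fin n)), ∀ p ∈ T,
      ((l.map fun i =>
        ((pderiv i).toLinearMap : MvPolynomial (Fin n) K →ₗ[K] _) ^ γ i).prod) p ∈ T := by
    intro γ l
    induction l with
    | nil => intro p hp; simpa using hp
    | cons a l ih =>
      intro p hp
      rw [List.map_cons, List.prod_cons, Module.End.mul_apply]
      exact hTpow a (γ a) _ (ih p hp)
  have hder : ∀ γ : Fin n → ℕ, derivPow γ (ψ u - TaylorAux.Phi ψ u) ∈ T := by
    intro γ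
    have h4 := hTlist γ (List.finRange n) _ (hgen u)
    rw [← List.ofFn_eq_map] at h4
    exact h4
  have hzero : ψ u - TaylorAux.Phi ψ u = 0 :=
    TaylorAux.eq_zero_of_constantCoeff_derivPow _ fun γ => hT0 _ (hder γ)
  exact sub_eq_zero.mp hzero
end

section
/- Let K be a field of characteristic 0, n ≥ 1, and K_n = K[x_1^{±1},...,x_n^{±1}] the Laurent polynomial algebra with partial derivatives ∂_i and θ = (1,...,1) ∈ ℤ^n. Then: (1) the monomial x^{−θ} does not belong to the K-linear span of {Jac_n^S(u_1,...,u_n) : u_1,...,u_n ∈ K_n}; (2) for every β ∈ ℤ^n with β ≠ −θ, the monomial x^β lies in this span; in fact, if β_i ≠ −1 then x^β = Jac_n^S(x_1,...,x_{i−1}, (β_i+1)^{−1} x^{β+ε_i}, x_{i+1},...,x_n). -/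
open Finset

/-- The Laurent polynomial algebra `K[x_1^{±1},…,x_n^{±1}]`, realized as the group algebra
of `ℤ^n` over `K`. -/
abbrev Laurent (K : Type*) [Field K] (n : ℕ) : Type _ := AddMonoidAlgebra K (Fin n → ℤ)

/-- The monomial `x^α`. -/
noncomputable def lmon {K : Type*} [Field K] {n : ℕ} (α : Fin n → ℤ) : Laurent K n :=
  AddMonoidAlgebra.single α 1

/-- The partial derivative `∂_i`, with `∂_i(x^α) = α_i x^{α − ε_i}`. -/
noncomputable def lpd {K : Type*} [Field K] {n : ℕ} (i : Fin n) (u : Laurent K n) :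
    Laurent K n :=
  Finsupp.sum u.coeff fun α c => AddMonoidAlgebra.single (α - Pi.single i 1) ((α i : K) * c)

/-- The Jacobian `Jac_n^S(u_1,…,u_n) = det(∂_i u_j)` on Laurent polynomials. -/
noncomputable def ljac {K : Type*} [Field K] {n : ℕ} (u : Fin n → Laurent K n) : Laurent K n :=
  Matrix.det (Matrix.of fun i j => lpd i (u j))

section aux
variable {K : Type*} [Field K] {n : ℕ}

lemma lpd_single (i : Fin n) (α : Fin n → ℤ) (c : K) :
    lpd i (AddMonoidAlgebra.single α c) =
      AddMonoidAlgebra.single (α - Pi.single i 1) ((α i : K) * c) := by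
  classical
  rw [lpd, AddMonoidAlgebra.coeff_single, Finsupp.sum_single_index]
  simp

noncomputable def lpdL (i : Fin n) : Laurent K n →ₗ[K] Laurent K n :=
  Finsupp.lsum K (fun α => (α i : K) • AddMonoidAlgebra.lsingle (α - Pi.single i 1)) ∘ₗ
    (AddMonoidAlgebra.coeffLinearEquiv K).toLinearMap

lemma lpd_eq (i : Fin n) (u : Laurent K n) : lpd i u = lpdL i u := by
  rw [lpd, lpdL, LinearMap.comp_apply]
  erw [Finsupp.lsum_apply]
  refine Finsupp.sum_congr fun α _ => ?_
  show _ = (α i : K) • AddMonoidAlgebra.single (α - Pi.single i 1) (u.coeff α)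
  rw [AddMonoidAlgebra.smul_single']


lemma lpd_smul (i : Fin n) (c : K) (u : Laurent K n) : lpd i (c • u) = c • lpd i u := by
  rw [lpd_eq, lpd_eq, map_smul]

lemma part3 [CharZero K] (β : Fin n → ℤ) (i : Fin n) (h : β i ≠ -1) :
    lmon (K := K) β = ljac (Function.update (fun j : Fin n => lmon (Pi.single j 1)) i
      ((((β i + 1 : ℤ) : K))⁻¹ • lmon (β + Pi.single i 1))) := by
  classical
  set c : K := ((β i + 1 : ℤ) : K) with hc
  have hc0 : c ≠ 0 := by
    rw [hc, Int.cast_ne_zero]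
    omega
  set γ : Fin n → ℤ := β + Pi.single i 1 with hγ
  have hmat : (Matrix.of fun k j => lpd k ((Function.update
      (fun j : Fin n => lmon (Pi.single j 1)) i (c⁻¹ • lmon γ)) j)) =
      (1 : Matrix (Fin n) (Fin n) (Laurent K n)).updateCol i
        (fun k => AddMonoidAlgebra.single (γ - Pi.single k 1)
          ((Int.cast (γ k) : K) * c⁻¹)) := by
    ext k j
    rw [Matrix.of_apply, Matrix.updateCol_apply]
    by_cases hj : j = i
    · rw [if_pos hj, hj, Function.update_self, lpd_smul,
        show lmon (K := K) γ = AddMonoidAlgebra.single γ 1 from rfl, lpd_single, mul_one,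
        AddMonoidAlgebra.smul_single', mul_comm]
    · rw [if_neg hj, Function.update_of_ne hj,
        show lmon (K := K) (Pi.single j 1) =
          AddMonoidAlgebra.single (Pi.single j 1) 1 from rfl, lpd_single, mul_one]
      by_cases hk : k = j
      · subst hk
        simp [Matrix.one_apply_eq, AddMonoidAlgebra.one_def]
      · rw [Matrix.one_apply_ne' (fun e => hk e.symm), Pi.single_eq_of_ne hk]
        simp
  unfold ljac
  rw [hmat, ← Matrix.cramer_apply, Matrix.cramer_one, Module.End.one_apply]
  show lmon (K := K) β =
    AddMonoidAlgebra.single (γ - Pi.single i 1) ((Int.cast (γ i) : K) * c⁻¹)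
  have h1 : γ - Pi.single i 1 = β := by rw [hγ]; abel
  have h2 : γ i = β i + 1 := by rw [hγ]; simp
  rw [h1, h2, show ((β i + 1 : ℤ) : K) = c from rfl, mul_inv_cancel₀ hc0]
  rfl

noncomputable def jacF (K : Type*) [Field K] (n : ℕ) :
    MultilinearMap K (fun _ : Fin n => Laurent K n) K :=
  ((Finsupp.lapply (fun _ => (-1 : ℤ)) : ((Fin n → ℤ) →₀ K) →ₗ[K] K) ∘ₗ
    (AddMonoidAlgebra.coeffLinearEquiv K).toLinearMap).compMultilinearMap
    (((Matrix.detRowAlternating :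
        (Fin n → Laurent K n) [⋀^Fin n]→ₗ[Laurent K n] Laurent K n).toMultilinearMap.restrictScalars
          K).compLinearMap (fun _ => LinearMap.pi fun i => lpdL i))

lemma jacF_apply (u : Fin n → Laurent K n) :
    jacF K n u = (ljac u).coeff (fun _ => (-1 : ℤ)) := by
  classical
  unfold jacF ljac
  show (Matrix.detRowAlternating (fun j i => lpdL (K := K) i (u j))).coeff (fun _ => (-1 : ℤ)) = _
  have hrow : (fun j i => lpdL (K := K) (n := n) i (u j)) = fun j i => lpd i (u j) := by
    funext j i
    rw [lpd_eq]
  rw [hrow]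
  congr 1
  rw [← Matrix.det_transpose]
  rfl

lemma ljac_mon (v : Fin n → (Fin n → ℤ)) :
    ljac (fun j => lmon (K := K) (v j)) =
      AddMonoidAlgebra.single ((∑ j, v j) - (fun _ => (1 : ℤ)))
        ((Matrix.of fun i j => (Int.cast (v j i) : K)).det) := by
  classical
  unfold ljac
  have hC : (Matrix.of fun i j =>
        AddMonoidAlgebra.single (0 : Fin n → ℤ) (Int.cast (v j i) : K)).det =
      AddMonoidAlgebra.single (0 : Fin n → ℤ)
        ((Matrix.of fun i j => (Int.cast (v j i) : K)).det) := by
    have hmap : (Matrix.of fun i j =>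
          AddMonoidAlgebra.single (0 : Fin n → ℤ) (Int.cast (v j i) : K)) =
        (algebraMap K (Laurent K n)).mapMatrix
          (Matrix.of fun i j => (Int.cast (v j i) : K)) := by
      ext i j
      simp [Matrix.map_apply, AddMonoidAlgebra.coe_algebraMap]
    rw [hmap, ← RingHom.map_det]
    simp [AddMonoidAlgebra.coe_algebraMap]
  have hM : (Matrix.of fun i j => lpd i (lmon (K := K) (v j))) =
      Matrix.of (fun i j => (AddMonoidAlgebra.single (-(Pi.single i 1 : Fin n → ℤ)) (1 : K)) *
        ((Matrix.of fun i j => (AddMonoidAlgebra.single (v j) (1 : K)) *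
          ((Matrix.of fun i j =>
            AddMonoidAlgebra.single (0 : Fin n → ℤ) (Int.cast (v j i) : K)) i j)) i j)) := by
    ext i j
    rw [Matrix.of_apply, Matrix.of_apply, Matrix.of_apply, Matrix.of_apply,
      show lmon (K := K) (v j) = AddMonoidAlgebra.single (v j) 1 from rfl, lpd_single, mul_one,
      AddMonoidAlgebra.single_mul_single, AddMonoidAlgebra.single_mul_single,
      show (-(Pi.single i 1 : Fin n → ℤ)) + (v j + 0) = v j - Pi.single i 1 by abel,
      one_mul, one_mul]
  rw [hM, Matrix.det_mul_column, Matrix.det_mul_row, hC,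
    AddMonoidAlgebra.prod_single, AddMonoidAlgebra.prod_single,
    AddMonoidAlgebra.single_mul_single, AddMonoidAlgebra.single_mul_single]
  congr 1
  · have h1 : (∑ i : Fin n, -(Pi.single i 1 : Fin n → ℤ)) = -(fun _ => (1 : ℤ)) := by
      rw [Finset.sum_neg_distrib, Finset.univ_sum_single (fun _ => (1 : ℤ))]
    rw [h1]
    abel
  · simp

lemma jacF_mon_zero [CharZero K] (hn : 1 ≤ n) (v : Fin n → (Fin n → ℤ)) :
    jacF K n (fun j => lmon (K := K) (v j)) = 0 := by
  classical
  rw [jacF_apply, ljac_mon]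
  rw [AddMonoidAlgebra.coeff_single, Finsupp.single_apply]
  by_cases hs : (∑ j, v j) - (fun _ => (1 : ℤ)) = fun _ => (-1 : ℤ)
  · rw [if_pos hs]
    have hsum : (∑ j, v j) = 0 := by
      funext k
      have := congrFun hs k
      simp at this
      simpa using this
    have hdet : (Matrix.of fun i j => (Int.cast (v j i) : K)).det = 0 := by
      rw [← Matrix.exists_mulVec_eq_zero_iff]
      refine ⟨fun _ => (1 : K), ?_, ?_⟩
      · intro h0
        have := congrFun h0 ⟨0, hn⟩
        simp at this
      · funext i
        simp only [Matrix.mulVec, dotProduct, Matrix.of_apply, mul_one, Pi.zero_apply]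
        have : (∑ j, v j i : ℤ) = 0 := by
          have h := congrFun hsum i
          simpa using h
        rw [← Int.cast_sum, this, Int.cast_zero]
    exact hdet
  · rw [if_neg hs]

lemma jacF_zero [CharZero K] (hn : 1 ≤ n) : jacF K n = 0 := by
  classical
  apply Module.Basis.ext_multilinear (fun _ => AddMonoidAlgebra.basis (Fin n → ℤ) K)
  intro v
  exact jacF_mon_zero hn v

end aux

/-- On the Laurent polynomial algebra (char `K = 0`, `n ≥ 1`): (1) `x^{−θ}` is not in the
`K`-span of the Jacobian values; (2) every other monomial `x^β` (β ≠ −θ) is; in fact, if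
`β_i ≠ −1` then `x^β = Jac_n^S(x_1,…,x_{i−1},(β_i+1)^{−1}x^{β+ε_i},x_{i+1},…,x_n)`. -/
theorem laurent_jacobian_span {K : Type*} [Field K] [CharZero K] {n : ℕ} (hn : 1 ≤ n) :
    ((lmon (K := K) (fun _ : Fin n => (-1 : ℤ))) ∉
      Submodule.span K (Set.range fun u : Fin n → Laurent K n => ljac u)) ∧
    (∀ β : Fin n → ℤ, β ≠ (fun _ => (-1 : ℤ)) →
      lmon (K := K) β ∈ Submodule.span K (Set.range fun u : Fin n → Laurent K n => ljac u)) ∧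
    (∀ (β : Fin n → ℤ) (i : Fin n), β i ≠ -1 →
      lmon (K := K) β = ljac (Function.update (fun j : Fin n => lmon (Pi.single j 1)) i
        ((((β i + 1 : ℤ) : K))⁻¹ • lmon (β + Pi.single i 1)))) := by

  classical
  refine ⟨?_, ?_, fun β i h => part3 β i h⟩
  · intro hmem
    have hker : Submodule.span K (Set.range fun u : Fin n → Laurent K n => ljac u) ≤
        LinearMap.ker (Finsupp.lapply (R := K) (M := K) (fun _ : Fin n => (-1 : ℤ)) ∘ₗ
          (AddMonoidAlgebra.coeffLinearEquiv K).toLinearMap) := by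
      rw [Submodule.span_le]
      rintro _ ⟨u, rfl⟩
      have h : jacF K n u = 0 := by rw [jacF_zero hn]; rfl
      rw [jacF_apply] at h
      exact h
    have h1 := hker hmem
    rw [LinearMap.mem_ker] at h1
    have h1' : (lmon (K := K) (fun _ : Fin n => (-1 : ℤ))).coeff (fun _ => (-1 : ℤ)) = 0 := h1
    have h2 : (lmon (K := K) (fun _ : Fin n => (-1 : ℤ))).coeff (fun _ => (-1 : ℤ)) = 1 := by
      show (Finsupp.single (fun _ : Fin n => (-1 : ℤ)) (1 : K)) _ = 1
      simp
    rw [h2] at h1'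
    exact one_ne_zero h1'
  · intro β hβ
    obtain ⟨i, hi⟩ : ∃ i, β i ≠ -1 := by
      by_contra h
      push_neg at h
      exact hβ (funext h)
    rw [part3 β i hi]
    exact Submodule.subset_span ⟨_, rfl⟩
end
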